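/- In the RS-game (N₀, v) corresponding to an RS-situation, every nonempty coalition T ⊆ N₀ with T ≠ {0} has positive value: v(T) > 0. -/
import Mathlib


open Finset

/-- An RS-situation with `n` retailers; the supplier is treated separately.
`c` is the unit production cost, `w` the wholesale price function and
`p i` the expected price function of retailer `i`.  All price functions are
decreasing and continuous on `[0, ∞)`, `w` exceeds `c` everywhere,
`p i 0 > w 0` and `p i` reaches the value `c` at some positive quantity. -/
structure RSSituation (n : ℕ) where
  c : ℝ
  w : ℝ → ℝ
  p : Fin n → ℝ → ℝ
  w_anti : ∀ ⦃q q' : ℝ⦄, 0 ≤ q → q ≤ q' → w q' ≤ w q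
  w_cont : ContinuousOn w (Set.Ici 0)
  w_gt_c : ∀ q : ℝ, 0 ≤ q → c < w q
  p_anti : ∀ i : Fin n, ∀ ⦃q q' : ℝ⦄, 0 ≤ q → q ≤ q' → p i q' ≤ p i q
  p_cont : ∀ i : Fin n, ContinuousOn (p i) (Set.Ici 0)
  p_zero_gt : ∀ i : Fin n, w 0 < p i 0
  exists_eq_c : ∀ i : Fin n, ∃ q : ℝ, 0 < q ∧ p i q = c

namespace RSSituation

variable {n : ℕ}

/-- The feasible set `Q^S ⊆ [0,∞)^S` of order vectors for a coalition `S` of retailers. -/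
def QSet (R : RSSituation n) (S : Finset (Fin n)) : Set (S → ℝ) :=
  {q | ∀ i : S, 0 ≤ q i ∧ R.w (∑ j : S, q j) ≤ R.p i.1 (q i)}

/-- The joint profit `∑_{i ∈ S} (p_i(q_i) - w(q_S)) q_i` of a coalition `S` of retailers. -/
def coalProfit (R : RSSituation n) (S : Finset (Fin n)) (q : S → ℝ) : ℝ :=
  ∑ i : S, (R.p i.1 (q i) - R.w (∑ j : S, q j)) * q i

/-- `q` is an optimal order vector for the coalition `S` of retailers. -/
def IsCoalOpt (R : RSSituation n) (S : Finset (Fin n)) (q : S → ℝ) : Prop :=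
  q ∈ R.QSet S ∧ ∀ q' ∈ R.QSet S, R.coalProfit S q' ≤ R.coalProfit S q

/-- The feasible set of order quantities of retailer `i` at unit price `c`. -/
def QcSet (R : RSSituation n) (i : Fin n) : Set ℝ :=
  {q | 0 ≤ q ∧ R.c ≤ R.p i q}

/-- The profit `(p_i(q) - c) q` of retailer `i` at unit price `c`. -/
def indProfit (R : RSSituation n) (i : Fin n) (q : ℝ) : ℝ :=
  (R.p i q - R.c) * q

/-- `q` is an optimal order quantity for retailer `i` at unit price `c`. -/
def IsIndOpt (R : RSSituation n) (i : Fin n) (q : ℝ) : Prop :=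
  q ∈ R.QcSet i ∧ ∀ q' ∈ R.QcSet i, R.indProfit i q' ≤ R.indProfit i q

/-- `v` is the RS-game determined by chosen optimal order vectors `qS S`
(for each retailer coalition `S`) and `qc i` (for each retailer `i`, when
cooperating with the supplier).  Players: `none` is the supplier `0`,
`some i` is retailer `i`. -/
def IsRSGame (R : RSSituation n) (qS : (S : Finset (Fin n)) → (S → ℝ))
    (qc : Fin n → ℝ) (v : Finset (Option (Fin n)) → ℝ) : Prop :=
  v ∅ = 0 ∧ v {none} = 0 ∧
    (∀ S : Finset (Fin n), S.Nonempty → v (S.image some) = R.coalProfit S (qS S)) ∧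
    (∀ S : Finset (Fin n), S.Nonempty →
      v (insert none (S.image some)) = ∑ i ∈ S, R.indProfit i (qc i))

/-- The core of a TU game on the player set `N₀ = Option (Fin n)`. -/
def core (v : Finset (Option (Fin n)) → ℝ) : Set (Option (Fin n) → ℝ) :=
  {x | ∑ i : Option (Fin n), x i = v Finset.univ ∧
    ∀ T : Finset (Option (Fin n)), v T ≤ ∑ i ∈ T, x i}

end RSSituation

lemma exists_pos_gt {f : ℝ → ℝ} (hf : ContinuousOn f (Set.Ici 0)) {a : ℝ} (ha : a < f 0) :
    ∃ q : ℝ, 0 < q ∧ a < f q := by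
  have h2 : ∀ᶠ q in nhdsWithin 0 (Set.Ici 0), a < f q :=
    (hf 0 Set.self_mem_Ici).eventually (eventually_gt_nhds ha)
  have h3 : ∀ᶠ q in nhdsWithin 0 (Set.Ioi 0), a < f q :=
    h2.filter_mono (nhdsWithin_mono _ Set.Ioi_subset_Ici_self)
  obtain ⟨q, hq1, hq2⟩ := (eventually_mem_nhdsWithin.and h3).exists
  exact ⟨q, hq1, hq2⟩

lemma coal_pos {n : ℕ} (R : RSSituation n) (S : Finset (Fin n)) (hS : S.Nonempty)
    {q : S → ℝ} (hq : R.IsCoalOpt S q) : 0 < R.coalProfit S q := by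
  choose δ hδpos hδ using fun i : Fin n => exists_pos_gt (R.p_cont i) (R.p_zero_gt i)
  obtain ⟨i0, hi0, hmin⟩ := S.exists_min_image δ hS
  set t := δ i0 with ht
  have htpos : 0 < t := hδpos i0
  haveI : Nonempty { x // x ∈ S } := hS.to_subtype
  have hsum : (0:ℝ) ≤ ∑ _j : S, t := by
    apply Finset.sum_nonneg
    intro j _
    exact htpos.le
  have hw : R.w (∑ _j : S, t) ≤ R.w 0 := R.w_anti le_rfl hsum
  have hpt : ∀ i : Fin n, i ∈ S → R.w 0 < R.p i t := by
    intro i hi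
    have h1 : R.p i (δ i) ≤ R.p i t := R.p_anti i htpos.le (hmin i hi)
    exact lt_of_lt_of_le (hδ i) h1
  have hfeas : (fun _ : S => t) ∈ R.QSet S := by
    intro i
    exact ⟨htpos.le, le_trans hw (hpt i.1 i.2).le⟩
  have hpos : 0 < R.coalProfit S (fun _ : S => t) := by
    unfold RSSituation.coalProfit
    apply Finset.sum_pos _ Finset.univ_nonempty
    intro i _
    have : R.w (∑ _j : S, t) < R.p i.1 t := lt_of_le_of_lt hw (hpt i.1 i.2)
    exact mul_pos (by linarith) htpos
  exact lt_of_lt_of_le hpos (hq.2 _ hfeas)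

lemma ind_pos {n : ℕ} (R : RSSituation n) (i : Fin n) {q : ℝ}
    (hq : R.IsIndOpt i q) : 0 < R.indProfit i q := by
  have hc : R.c < R.p i 0 := lt_trans (R.w_gt_c 0 le_rfl) (R.p_zero_gt i)
  obtain ⟨t, htpos, htc⟩ := exists_pos_gt (R.p_cont i) hc
  have hfeas : t ∈ R.QcSet i := ⟨htpos.le, htc.le⟩
  have hpos : 0 < R.indProfit i t := mul_pos (by linarith) htpos
  exact lt_of_lt_of_le hpos (hq.2 _ hfeas)

/-- In an RS-game, every nonempty coalition other than `{0}` (the supplier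
alone) has positive value. -/
theorem rs_game_positive_values (n : ℕ) (R : RSSituation n)
    (qS : (S : Finset (Fin n)) → (S → ℝ)) (qc : Fin n → ℝ)
    (hqS : ∀ S : Finset (Fin n), S.Nonempty → R.IsCoalOpt S (qS S))
    (hqc : ∀ i : Fin n, R.IsIndOpt i (qc i))
    (v : Finset (Option (Fin n)) → ℝ) (hv : R.IsRSGame qS qc v)
    (T : Finset (Option (Fin n))) (hT : T.Nonempty) (hT0 : T ≠ {none}) :
    0 < v T := by
  obtain ⟨hv0, hvn, hvS, hvS0⟩ := hv
  set S : Finset (Fin n) := T.eraseNone with hSdef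
  by_cases hn : none ∈ T
  · have hTeq : T = insert none (S.image some) := by
      ext x
      cases x with
      | none => simp [hn]
      | some a => simp [hSdef, Finset.mem_eraseNone]
    have hSne : S.Nonempty := by
      by_contra h
      rw [Finset.not_nonempty_iff_eq_empty] at h
      apply hT0
      rw [hTeq, h]
      simp
    rw [hTeq, hvS0 S hSne]
    exact Finset.sum_pos (fun i _ => ind_pos R i (hqc i)) hSne
  · have hTeq : T = S.image some := by
      ext x
      cases x with
      | none => simp [hn]
      | some a => simp [hSdef, Finset.mem_eraseNone]
    have hSne : S.Nonempty := by
      obtain ⟨x, hx⟩ := hT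
      cases x with
      | none => exact absurd hx hn
      | some a => exact ⟨a, Finset.mem_eraseNone.2 hx⟩
    rw [hTeq, hvS S hSne]
    exact coal_pos R S hSne (hqS S hSne)
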